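/- Let λ_1,…,λ_n be pairwise distinct reals. With ρ_r and Δ_i as below, for every r = 1,…,n one has the interpolation identity Σ_{i=1}^n (∂ρ_r/∂λ_i) · λ_i^n / Δ_i = ρ_r. (This identity expresses that the first generic separable potential V_r^{(1)}, obtained from the Stäckel inversion of the monomial γ(λ) = λ^n, equals the Viète polynomial ρ_r up to sign.) -/

import Mathlib

open Finset

/-- The Viète polynomial `ρ_r(λ)`. -/
noncomputable def viete (n : ℕ) (r : ℕ) (x : Fin n → ℝ) : ℝ :=
  (-1 : ℝ) ^ r * ∑ s ∈ Finset.powersetCard r (Finset.univ : Finset (Fin n)),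
    ∏ j ∈ s, x j

/-- `Δ_i(λ) = ∏_{j≠i} (λ_i − λ_j)`. -/
noncomputable def Delta (n : ℕ) (lam : Fin n → ℝ) (i : Fin n) : ℝ :=
  ∏ j ∈ Finset.univ.erase i, (lam i - lam j)

lemma viete_hasFDerivAt (n r : ℕ) (lam : Fin n → ℝ) :
    HasFDerivAt (viete n r)
      ((-1:ℝ)^r • ∑ s ∈ Finset.powersetCard r (Finset.univ : Finset (Fin n)),
        ∑ j ∈ s, (∏ k ∈ s.erase j, lam k) • (ContinuousLinearMap.proj j :
          (Fin n → ℝ) →L[ℝ] ℝ)) lam := by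
  have h : ∀ s ∈ Finset.powersetCard r (Finset.univ : Finset (Fin n)),
      HasFDerivAt (fun x : Fin n → ℝ => ∏ j ∈ s, x j)
        (∑ j ∈ s, (∏ k ∈ s.erase j, lam k) • (ContinuousLinearMap.proj j :
          (Fin n → ℝ) →L[ℝ] ℝ)) lam := by
    intro s _
    exact HasFDerivAt.finset_prod (fun j _ => hasFDerivAt_apply j lam)
  have := (HasFDerivAt.fun_sum h).const_mul ((-1:ℝ)^r)
  exact this

lemma viete_fderiv (n r : ℕ) (hr : 1 ≤ r) (lam : Fin n → ℝ) (i : Fin n) :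
    fderiv ℝ (viete n r) lam (Pi.single i 1) =
      (-1:ℝ)^r * ∑ t ∈ Finset.powersetCard (r-1) ((Finset.univ : Finset (Fin n)).erase i),
        ∏ j ∈ t, lam j := by
  rw [(viete_hasFDerivAt n r lam).fderiv]
  simp only [ContinuousLinearMap.smul_apply, ContinuousLinearMap.sum_apply,
    ContinuousLinearMap.proj_apply, smul_eq_mul]
  congr 1
  have hsingle : ∀ j : Fin n, (Pi.single i 1 : Fin n → ℝ) j = if j = i then 1 else 0 := by
    intro j; rw [Pi.single_apply]
  have inner : ∀ s : Finset (Fin n),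
      ∑ j ∈ s, (∏ k ∈ s.erase j, lam k) * (Pi.single i 1 : Fin n → ℝ) j
        = if i ∈ s then ∏ k ∈ s.erase i, lam k else 0 := by
    intro s
    simp only [hsingle, mul_ite, mul_one, mul_zero]
    rw [Finset.sum_ite_eq' s i (fun j => ∏ k ∈ s.erase j, lam k)]
  simp only [inner]
  rw [← Finset.sum_filter]
  refine Finset.sum_nbij' (fun s => s.erase i) (fun t => insert i t) ?_ ?_ ?_ ?_ ?_
  · intro s hs
    simp only [Finset.mem_filter, Finset.mem_powersetCard] at hs ⊢
    exact ⟨fun x hx => Finset.mem_erase.mpr ⟨(Finset.mem_erase.mp hx).1, Finset.mem_univ x⟩,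
      by rw [Finset.card_erase_of_mem hs.2, hs.1.2]⟩
  · intro t ht
    simp only [Finset.mem_powersetCard, Finset.mem_filter] at ht ⊢
    have hit : i ∉ t := fun h => (Finset.mem_erase.mp (ht.1 h)).1 rfl
    refine ⟨⟨fun x _ => Finset.mem_univ x, ?_⟩, Finset.mem_insert_self i t⟩
    rw [Finset.card_insert_of_notMem hit, ht.2]
    omega
  · intro s hs
    simp only [Finset.mem_filter] at hs
    exact Finset.insert_erase hs.2
  · intro t ht
    simp only [Finset.mem_powersetCard] at ht
    exact Finset.erase_insert (fun h => (Finset.mem_erase.mp (ht.1 h)).1 rfl)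
  · intro s _; rfl

open Polynomial in
lemma coeff_prod_X_sub_C {ι : Type*} (t : Finset ι) (f : ι → ℝ) {k : ℕ} (hk : k ≤ t.card) :
    (∏ j ∈ t, (X - C (f j))).coeff k
      = (-1:ℝ)^(t.card - k) * ∑ u ∈ t.powersetCard (t.card - k), ∏ j ∈ u, f j := by
  have h1 : ∀ j : ι, (X - C (f j)) = (X + C (-(f j))) := by intro j; rw [map_neg, sub_eq_add_neg]
  simp_rw [h1]
  rw [Finset.prod_X_add_C_coeff t (fun j => -(f j)) hk, Finset.mul_sum]
  refine Finset.sum_congr rfl fun u hu => ?_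
  have hcard : u.card = t.card - k := (Finset.mem_powersetCard.mp hu).2
  calc ∏ j ∈ u, -(f j) = ∏ j ∈ u, ((-1:ℝ) * f j) := by simp
    _ = (∏ _j ∈ u, (-1:ℝ)) * ∏ j ∈ u, f j := Finset.prod_mul_distrib
    _ = (-1:ℝ)^(t.card - k) * ∏ j ∈ u, f j := by rw [Finset.prod_const, hcard]

open Polynomial in
lemma key_sum (n : ℕ) (lam : Fin n → ℝ) (hlam : Function.Injective lam) (r : ℕ)
    (hr1 : 1 ≤ r) (hrn : r ≤ n) :
    ∑ s ∈ Finset.powersetCard r (Finset.univ : Finset (Fin n)), ∏ j ∈ s, lam j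
      = ∑ i : Fin n, lam i ^ n * ((Delta n lam i)⁻¹ *
          ∑ t ∈ Finset.powersetCard (r-1) ((Finset.univ : Finset (Fin n)).erase i),
            ∏ j ∈ t, lam j) := by
  set P : ℝ[X] := ∏ j : Fin n, (X - C (lam j)) with hPdef
  have hP : P.Monic := monic_prod_of_monic _ _ fun j _ => monic_X_sub_C _
  have hPnd : P.natDegree = n := by
    rw [hPdef, Polynomial.natDegree_prod _ _ (fun j _ => X_sub_C_ne_zero (lam j))]
    simp
  have hPdeg : P.degree = (n : WithBot ℕ) := by
    rw [Polynomial.degree_eq_natDegree hP.ne_zero, hPnd]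
  set F : ℝ[X] := X ^ n - P with hFdef
  have hdegF : F.degree < ((Finset.univ : Finset (Fin n)).card : WithBot ℕ) := by
    rw [Finset.card_univ, Fintype.card_fin]
    have := Polynomial.degree_sub_lt (p := (X:ℝ[X])^n) (q := P)
      (by rw [degree_X_pow, hPdeg]) (pow_ne_zero n X_ne_zero) (by rw [leadingCoeff_X_pow, hP.leadingCoeff])
    rwa [degree_X_pow] at this
  have hinterp : F = Lagrange.interpolate Finset.univ lam (fun i => F.eval (lam i)) :=
    Lagrange.eq_interpolate (Set.injOn_of_injective hlam) hdegF
  have hevalF : ∀ i : Fin n, F.eval (lam i) = lam i ^ n := by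
    intro i
    have : P.eval (lam i) = 0 := by
      rw [hPdef, eval_prod]
      exact Finset.prod_eq_zero (Finset.mem_univ i) (by simp)
    simp [hFdef, this]
  -- take coefficient (n - r) of both sides
  have hc := congrArg (fun p : ℝ[X] => p.coeff (n - r)) hinterp
  simp only [Lagrange.interpolate_apply] at hc
  -- LHS coefficient
  have hlhs : F.coeff (n - r)
      = -((-1:ℝ)^r * ∑ s ∈ Finset.powersetCard r (Finset.univ : Finset (Fin n)),
          ∏ j ∈ s, lam j) := by
    have hPc : P.coeff (n - r)
        = (-1:ℝ)^r * ∑ s ∈ Finset.powersetCard r (Finset.univ : Finset (Fin n)),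
            ∏ j ∈ s, lam j := by
      have hcu : (Finset.univ : Finset (Fin n)).card = n := by simp
      have h2 : n - (n - r) = r := by omega
      have := coeff_prod_X_sub_C (Finset.univ : Finset (Fin n)) lam
        (k := n - r) (by rw [hcu]; omega)
      rw [hcu, h2] at this
      rw [hPdef, this]
    have hX : ((X:ℝ[X]) ^ n).coeff (n - r) = 0 := by
      rw [coeff_X_pow]
      simp only [ite_eq_right_iff]
      intro h; omega
    rw [hFdef, Polynomial.coeff_sub, hX, hPc, zero_sub]
  -- RHS coefficient
  have hbasis : ∀ i : Fin n, (Lagrange.basis Finset.univ lam i).coeff (n - r)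
      = (Delta n lam i)⁻¹ * ((-1:ℝ)^(r-1) *
          ∑ t ∈ Finset.powersetCard (r-1) ((Finset.univ : Finset (Fin n)).erase i),
            ∏ j ∈ t, lam j) := by
    intro i
    have hcard : ((Finset.univ : Finset (Fin n)).erase i).card = n - 1 := by
      rw [Finset.card_erase_of_mem (Finset.mem_univ i)]; simp
    have hsplit : Lagrange.basis Finset.univ lam i
        = C ((Delta n lam i)⁻¹) * ∏ j ∈ (Finset.univ : Finset (Fin n)).erase i,
            (X - C (lam j)) := by
      rw [Lagrange.basis]
      simp_rw [Lagrange.basisDivisor]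
      rw [Finset.prod_mul_distrib]
      congr 1
      rw [← map_prod]
      congr 1
      rw [Finset.prod_inv_distrib]
      rfl
    have h3 : (n - 1) - (n - r) = r - 1 := by omega
    rw [hsplit, coeff_C_mul, coeff_prod_X_sub_C _ _ (by rw [hcard]; omega), hcard, h3]
  simp only [finset_sum_coeff, coeff_C_mul, hevalF, hbasis, hlhs] at hc
  -- now massage signs
  have hsign : -((-1:ℝ)^r) = (-1:ℝ)^(r-1) := by
    obtain ⟨m, rfl⟩ : ∃ m, r = m + 1 := ⟨r - 1, by omega⟩
    simp [pow_succ]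
  have hrhs : ∑ i : Fin n, lam i ^ n * ((Delta n lam i)⁻¹ * ((-1:ℝ)^(r-1) *
        ∑ t ∈ Finset.powersetCard (r-1) ((Finset.univ : Finset (Fin n)).erase i),
          ∏ j ∈ t, lam j))
      = (-1:ℝ)^(r-1) * ∑ i : Fin n, lam i ^ n * ((Delta n lam i)⁻¹ *
          ∑ t ∈ Finset.powersetCard (r-1) ((Finset.univ : Finset (Fin n)).erase i),
            ∏ j ∈ t, lam j) := by
    rw [Finset.mul_sum]; refine Finset.sum_congr rfl fun i _ => by ring
  rw [hrhs] at hc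
  rw [neg_mul_eq_neg_mul, hsign] at hc
  exact mul_left_cancel₀ (by positivity) hc

/-- for pairwise distinct `λ_1,…,λ_n` and every `r = 1,…,n`,
`Σ_i (∂ρ_r/∂λ_i) λ_i^n / Δ_i = ρ_r`. -/
theorem stmt7 (n : ℕ) (lam : Fin n → ℝ) (hlam : Function.Injective lam) :
    ∀ r ∈ Finset.Icc 1 n,
      ∑ i : Fin n,
        fderiv ℝ (viete n r) lam (Pi.single i 1) * lam i ^ n / Delta n lam i
        = viete n r lam := by
  intro r hr
  obtain ⟨hr1, hrn⟩ := Finset.mem_Icc.mp hr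
  have hkey := key_sum n lam hlam r hr1 hrn
  calc ∑ i : Fin n,
        fderiv ℝ (viete n r) lam (Pi.single i 1) * lam i ^ n / Delta n lam i
      = ∑ i : Fin n, (-1:ℝ)^r * (lam i ^ n * ((Delta n lam i)⁻¹ *
          ∑ t ∈ Finset.powersetCard (r-1) ((Finset.univ : Finset (Fin n)).erase i),
            ∏ j ∈ t, lam j)) := by
        refine Finset.sum_congr rfl fun i _ => ?_
        rw [viete_fderiv n r hr1 lam i, div_eq_mul_inv]
        ring
    _ = (-1:ℝ)^r * ∑ i : Fin n, lam i ^ n * ((Delta n lam i)⁻¹ *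
          ∑ t ∈ Finset.powersetCard (r-1) ((Finset.univ : Finset (Fin n)).erase i),
            ∏ j ∈ t, lam j) := by rw [Finset.mul_sum]
    _ = viete n r lam := by rw [← hkey, viete]
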